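/- For λ = (e^{iΘ₁},…,e^{iΘ_m}) ∈ T^m, define u₊(t) = √(t²+1)·e^{−t·arctan t}·(cos((Θ₁+…+Θ_m)/2), sin((Θ₁+…+Θ_m)/2)) for t ≥ 0. Then u₊ satisfies the ODE Ju′(t) + (arctan t)·J·S_{Θ₁+…+Θ_m}·u(t) = 0 for t ≥ 0 and u₊(t) → 0 as t → +∞. -/

import Mathlib

open Real Matrix Filter

lemma phi_hasDerivAt (t : ℝ) :
    HasDerivAt (fun t : ℝ => Real.sqrt (t ^ 2 + 1) * Real.exp (-t * arctan t))
      ((-arctan t) * (Real.sqrt (t ^ 2 + 1) * Real.exp (-t * arctan t))) t := by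
  have hpos : (0:ℝ) < t ^ 2 + 1 := by positivity
  have hsp : (0:ℝ) < Real.sqrt (t ^ 2 + 1) := Real.sqrt_pos.2 hpos
  have hsq : Real.sqrt (t ^ 2 + 1) ^ 2 = t ^ 2 + 1 := Real.sq_sqrt hpos.le
  have hs : HasDerivAt (fun t : ℝ => Real.sqrt (t ^ 2 + 1)) (t / Real.sqrt (t ^ 2 + 1)) t := by
    have h0 := ((hasDerivAt_pow 2 t).add_const 1).sqrt (by positivity)
    convert h0 using 1
    field_simp
    ring
  have hi : HasDerivAt (fun t : ℝ => -t * arctan t)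
      (-1 * arctan t + -t * (1 / (1 + t ^ 2))) t :=
    ((hasDerivAt_id t).neg).mul (Real.hasDerivAt_arctan t)
  have he := hi.exp
  have h : HasDerivAt (fun t : ℝ => Real.sqrt (t ^ 2 + 1) * Real.exp (-t * arctan t)) _ t :=
    hs.mul he
  convert h using 1
  field_simp
  linear_combination t * hsq

lemma phi_tendsto :
    Tendsto (fun t : ℝ => Real.sqrt (t ^ 2 + 1) * Real.exp (-t * arctan t)) atTop (nhds 0) := by
  have hbig : Tendsto (fun t : ℝ => t ^ 1 * Real.exp (-t) + Real.exp (-t)) atTop (nhds 0) := by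
    have h1 := Real.tendsto_pow_mul_exp_neg_atTop_nhds_zero 1
    have h2 : Tendsto (fun t : ℝ => Real.exp (-t)) atTop (nhds 0) := by
      simpa using Real.tendsto_exp_neg_atTop_nhds_zero
    simpa using h1.add h2
  apply squeeze_zero' (Eventually.of_forall fun t => by positivity)
  · filter_upwards [eventually_ge_atTop (max (Real.tan 1) 0)] with t ht
    have ht0 : 0 ≤ t := le_trans (le_max_right _ _) ht
    have harc : 1 ≤ arctan t := by
      have : arctan (Real.tan 1) ≤ arctan t :=
        Real.arctan_strictMono.monotone (le_trans (le_max_left _ _) ht)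
      rwa [Real.arctan_tan (by linarith [Real.pi_gt_three]) (by linarith [Real.pi_gt_three])] at this
    have h1 : Real.sqrt (t ^ 2 + 1) ≤ t + 1 := by
      rw [show t + 1 = Real.sqrt ((t+1)^2) by rw [Real.sqrt_sq (by linarith)]]
      exact Real.sqrt_le_sqrt (by nlinarith)
    have h2 : Real.exp (-t * arctan t) ≤ Real.exp (-t) := by
      apply Real.exp_le_exp.2
      nlinarith
    calc Real.sqrt (t ^ 2 + 1) * Real.exp (-t * arctan t)
        ≤ (t + 1) * Real.exp (-t) := by
          apply mul_le_mul h1 h2 (Real.exp_pos _).le (by linarith)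
      _ = t ^ 1 * Real.exp (-t) + Real.exp (-t) := by ring
  · exact hbig

/-- For `Θ = Θ₁ + … + Θ_m`, the function
`u₊(t) = √(t²+1) e^{-t arctan t} (cos(Θ/2), sin(Θ/2))` satisfies the Hamiltonian
system `J u′(t) + (arctan t)·J·S_Θ·u(t) = 0` for `t ≥ 0` and tends to `0` as
`t → +∞`. -/
theorem u_plus_solves_and_decays (m : ℕ) (Θs : Fin m → ℝ) :
    let Θ : ℝ := ∑ i, Θs i
    let J : Matrix (Fin 2) (Fin 2) ℝ := !![0, -1; 1, 0]
    let S : Matrix (Fin 2) (Fin 2) ℝ := !![cos Θ, sin Θ; sin Θ, -cos Θ]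
    let u : ℝ → Fin 2 → ℝ := fun t =>
      (Real.sqrt (t ^ 2 + 1) * Real.exp (-t * arctan t)) • ![cos (Θ / 2), sin (Θ / 2)]
    (∀ t : ℝ, 0 ≤ t →
        HasDerivAt u ((-arctan t) • u t) t ∧
        J *ᵥ ((-arctan t) • u t) + (arctan t • (J * S)) *ᵥ u t = 0) ∧
      Tendsto u atTop (nhds 0) := by
  intro Θ J S u
  have hc : cos Θ * cos (Θ / 2) + sin Θ * sin (Θ / 2) = cos (Θ / 2) := by
    rw [← Real.cos_sub]; congr 1; ring
  have hsn : sin Θ * cos (Θ / 2) - cos Θ * sin (Θ / 2) = sin (Θ / 2) := by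
    rw [← Real.sin_sub]; congr 1; ring
  have hSv : S *ᵥ ![cos (Θ / 2), sin (Θ / 2)] = ![cos (Θ / 2), sin (Θ / 2)] := by
    funext i
    fin_cases i <;>
      simp [S, mulVec, dotProduct, Fin.sum_univ_two] <;>
      linarith [hc, hsn]
  constructor
  · intro t ht
    constructor
    · have h := (phi_hasDerivAt t).smul_const ![cos (Θ / 2), sin (Θ / 2)]
      show HasDerivAt u ((-arctan t) • ((Real.sqrt (t ^ 2 + 1) * Real.exp (-t * arctan t)) •
        ![cos (Θ / 2), sin (Θ / 2)])) t
      rw [smul_smul]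
      exact h
    · have : (J * S) *ᵥ u t = J *ᵥ u t := by
        rw [← mulVec_mulVec]
        simp only [u, mulVec_smul, hSv]
      rw [smul_mulVec, this, mulVec_smul]
      rw [neg_smul, neg_add_cancel]
  · have h := phi_tendsto.smul_const (![cos (Θ / 2), sin (Θ / 2)] : Fin 2 → ℝ)
    simpa [u] using h
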